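/- arXiv:2011.09415 — 3 statements merged into one kernel-verified Lean document; each statement's English description precedes it below -/
import Mathlib

section
/- Let n ≥ 1 be an integer and set W(n) = (−A⁶−A⁻⁶)·(−A²−A⁻²) + (−A⁴−A⁻⁴+2)·P(n)·P̄(n) in ℤ[A, A⁻¹]. Then h(W(n)) = 4n+12 and ℓ(W(n)) = −4n−12, so that span(W(n)) = 8n+24; in particular span(W(n)) > 16, hence span(W(n)) ≠ 16. -/
open LaurentPolynomial Finset

/-- The coefficient of `A^k` in the Laurent polynomial `y ∈ ℤ[A,A⁻¹]`. -/
noncomputable def coeffA (y : LaurentPolynomial ℤ) (k : ℤ) : ℤ := AddMonoidAlgebra.coeff y k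

/-- `y` has highest exponent `d`, with coefficient `c` (nonzero) on `A^d`. -/
def HiCoeff (y : LaurentPolynomial ℤ) (d c : ℤ) : Prop :=
  coeffA y d = c ∧ c ≠ 0 ∧ ∀ k, d < k → coeffA y k = 0

/-- `y` has lowest exponent `d`, with coefficient `c` (nonzero) on `A^d`. -/
def LoCoeff (y : LaurentPolynomial ℤ) (d c : ℤ) : Prop :=
  coeffA y d = c ∧ c ≠ 0 ∧ ∀ k, k < d → coeffA y k = 0

/-- `y` has highest exponent `d`: `h(y) = d`. -/
def IsHi (y : LaurentPolynomial ℤ) (d : ℤ) : Prop :=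
  coeffA y d ≠ 0 ∧ ∀ k, d < k → coeffA y k = 0

/-- `y` has lowest exponent `d`: `ℓ(y) = d`. -/
def IsLo (y : LaurentPolynomial ℤ) (d : ℤ) : Prop :=
  coeffA y d ≠ 0 ∧ ∀ k, k < d → coeffA y k = 0

/-- P(n) = A^{−n−6} + (A⁴+A⁻⁴)·Σ_{k=1}^{n} (−1)^k A^{4k−n−2} -/
noncomputable def P (n : ℕ) : LaurentPolynomial ℤ :=
  T (-(n:ℤ) - 6) +
    (T 4 + T (-4)) * ∑ k ∈ Finset.Icc 1 n, (-1 : LaurentPolynomial ℤ)^k * T (4*(k:ℤ) - n - 2)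

/-- P̄(n) = A^{n+6} + (A⁴+A⁻⁴)·Σ_{k=1}^{n} (−1)^k A^{−4k+n+2} -/
noncomputable def Pbar (n : ℕ) : LaurentPolynomial ℤ :=
  T ((n:ℤ) + 6) +
    (T 4 + T (-4)) * ∑ k ∈ Finset.Icc 1 n, (-1 : LaurentPolynomial ℤ)^k * T (-4*(k:ℤ) + n + 2)

/-- Q(j) = −A^{2−j} + Σ_{k=0}^{j} (−1)^{k+1} A^{4k−j−2} -/
noncomputable def Q (j : ℕ) : LaurentPolynomial ℤ :=
  -T (2 - (j:ℤ)) + ∑ k ∈ Finset.range (j+1), (-1 : LaurentPolynomial ℤ)^(k+1) * T (4*(k:ℤ) - j - 2)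

/-- N(j) = (−A⁶−A⁻⁶)·(−A³)^j + (−A⁴−A⁻⁴+2)·Q(j) -/
noncomputable def N (j : ℕ) : LaurentPolynomial ℤ :=
  (-T 6 - T (-6)) * (-T 3)^j + (-T 4 - T (-4) + 2) * Q j

/-- R(m) = A^{−m−5} + (A⁴+A⁻⁴)·Σ_{k=1}^{m−1} (−1)^k A^{4k−m−1} -/
noncomputable def Rm (m : ℕ) : LaurentPolynomial ℤ :=
  T (-(m:ℤ) - 5) +
    (T 4 + T (-4)) * ∑ k ∈ Finset.Icc 1 (m-1), (-1 : LaurentPolynomial ℤ)^k * T (4*(k:ℤ) - m - 1)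

/- ====== auxiliary lemmas ====== -/


lemma my_add_apply (p q : LaurentPolynomial ℤ) (k : ℤ) : AddMonoidAlgebra.coeff (p+q) k = AddMonoidAlgebra.coeff p k + AddMonoidAlgebra.coeff q k :=
  Finsupp.add_apply _ _ _
lemma my_sub_apply (p q : LaurentPolynomial ℤ) (k : ℤ) : AddMonoidAlgebra.coeff (p-q) k = AddMonoidAlgebra.coeff p k - AddMonoidAlgebra.coeff q k :=
  Finsupp.sub_apply _ _ _
lemma my_neg_apply (p : LaurentPolynomial ℤ) (k : ℤ) : AddMonoidAlgebra.coeff (-p) k = -(AddMonoidAlgebra.coeff p k) :=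
  Finsupp.neg_apply _ _
lemma my_sum_apply (s : Finset ℕ) (f : ℕ → LaurentPolynomial ℤ) (k : ℤ) :
    AddMonoidAlgebra.coeff (∑ j ∈ s, f j) k = ∑ j ∈ s, AddMonoidAlgebra.coeff (f j) k := by
  rw [AddMonoidAlgebra.coeff_sum]; exact Finsupp.finset_sum_apply _ _ _
lemma my_single_apply (m : ℤ) (c : ℤ) (k : ℤ) :
    AddMonoidAlgebra.coeff (AddMonoidAlgebra.single m c : LaurentPolynomial ℤ) k = if m = k then c else 0 :=
  Finsupp.single_apply

lemma my_coeffA_mul (p q : LaurentPolynomial ℤ) (k : ℤ) :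
    coeffA (p*q) k = p.coeff.sum fun a b => q.coeff.sum fun a' b' => if a + a' = k then b * b' else 0 :=
  AddMonoidAlgebra.coeff_mul p q k

/-- upper bound on the support -/
def UBd (y : LaurentPolynomial ℤ) (d : ℤ) : Prop := ∀ k, d < k → coeffA y k = 0
/-- lower bound on the support -/
def LBd (y : LaurentPolynomial ℤ) (d : ℤ) : Prop := ∀ k, k < d → coeffA y k = 0

lemma my_mul_UBd {p q : LaurentPolynomial ℤ} {d e : ℤ} (hp : UBd p d) (hq : UBd q e) :
    UBd (p*q) (d+e) := by
  intro k hk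
  rw [my_coeffA_mul]
  simp only [Finsupp.sum]
  refine Finset.sum_eq_zero fun a ha => Finset.sum_eq_zero fun a' ha' => ?_
  have h1 : a ≤ d := by by_contra h; exact (Finsupp.mem_support_iff.mp ha) (hp a (by omega))
  have h2 : a' ≤ e := by by_contra h; exact (Finsupp.mem_support_iff.mp ha') (hq a' (by omega))
  rw [if_neg (by omega)]

lemma my_mul_LBd {p q : LaurentPolynomial ℤ} {d e : ℤ} (hp : LBd p d) (hq : LBd q e) :
    LBd (p*q) (d+e) := by
  intro k hk
  rw [my_coeffA_mul]
  simp only [Finsupp.sum]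
  refine Finset.sum_eq_zero fun a ha => Finset.sum_eq_zero fun a' ha' => ?_
  have h1 : d ≤ a := by by_contra h; exact (Finsupp.mem_support_iff.mp ha) (hp a (by omega))
  have h2 : e ≤ a' := by by_contra h; exact (Finsupp.mem_support_iff.mp ha') (hq a' (by omega))
  rw [if_neg (by omega)]

lemma my_coeffA_mul_top {p q : LaurentPolynomial ℤ} {d e : ℤ} (hp : UBd p d) (hq : UBd q e) :
    coeffA (p*q) (d+e) = coeffA p d * coeffA q e := by
  rw [my_coeffA_mul]
  simp only [Finsupp.sum]
  have key : ∀ a ∈ p.coeff.support,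
      (∑ a' ∈ q.coeff.support, if a + a' = d + e then p.coeff a * q.coeff a' else 0)
        = if a = d then p.coeff a * q.coeff e else 0 := by
    intro a ha
    have hale : a ≤ d := by by_contra h; exact (Finsupp.mem_support_iff.mp ha) (hp a (by omega))
    by_cases had : a = d
    · subst had
      rw [if_pos rfl, Finset.sum_eq_single e]
      · rw [if_pos rfl]
      · intro b hb hbe
        have : b ≤ e := by by_contra h; exact (Finsupp.mem_support_iff.mp hb) (hq b (by omega))
        rw [if_neg (by omega)]
      · intro he
        rw [Finsupp.notMem_support_iff.mp he, mul_zero, if_pos rfl]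
    · rw [if_neg had]
      refine Finset.sum_eq_zero fun b hb => ?_
      have : b ≤ e := by by_contra h; exact (Finsupp.mem_support_iff.mp hb) (hq b (by omega))
      rw [if_neg (by omega)]
  rw [Finset.sum_congr rfl key, Finset.sum_ite_eq' p.coeff.support d (fun a => p.coeff a * q.coeff e)]
  by_cases hd : d ∈ p.coeff.support
  · rw [if_pos hd]; rfl
  · rw [if_neg hd]
    show (0:ℤ) = p.coeff d * q.coeff e
    rw [Finsupp.notMem_support_iff.mp hd, zero_mul]

lemma my_coeffA_mul_bot {p q : LaurentPolynomial ℤ} {d e : ℤ} (hp : LBd p d) (hq : LBd q e) :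
    coeffA (p*q) (d+e) = coeffA p d * coeffA q e := by
  rw [my_coeffA_mul]
  simp only [Finsupp.sum]
  have key : ∀ a ∈ p.coeff.support,
      (∑ a' ∈ q.coeff.support, if a + a' = d + e then p.coeff a * q.coeff a' else 0)
        = if a = d then p.coeff a * q.coeff e else 0 := by
    intro a ha
    have hale : d ≤ a := by by_contra h; exact (Finsupp.mem_support_iff.mp ha) (hp a (by omega))
    by_cases had : a = d
    · subst had
      rw [if_pos rfl, Finset.sum_eq_single e]
      · rw [if_pos rfl]
      · intro b hb hbe
        have : e ≤ b := by by_contra h; exact (Finsupp.mem_support_iff.mp hb) (hq b (by omega))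
        rw [if_neg (by omega)]
      · intro he
        rw [Finsupp.notMem_support_iff.mp he, mul_zero, if_pos rfl]
    · rw [if_neg had]
      refine Finset.sum_eq_zero fun b hb => ?_
      have : e ≤ b := by by_contra h; exact (Finsupp.mem_support_iff.mp hb) (hq b (by omega))
      rw [if_neg (by omega)]
  rw [Finset.sum_congr rfl key, Finset.sum_ite_eq' p.coeff.support d (fun a => p.coeff a * q.coeff e)]
  by_cases hd : d ∈ p.coeff.support
  · rw [if_pos hd]; rfl
  · rw [if_neg hd]
    show (0:ℤ) = p.coeff d * q.coeff e
    rw [Finsupp.notMem_support_iff.mp hd, zero_mul]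

lemma my_expand (c m : ℤ) :
    (T 4 + T (-4)) * (C c * T m) = C c * T (m+4) + C c * T (m-4) := by
  rw [T_add, show m - 4 = m + (-4) by ring, T_add]; ring

lemma my_neg_one_pow (j : ℕ) :
    ((-1 : LaurentPolynomial ℤ))^j = C ((-1:ℤ)^j) := by
  rw [map_pow, map_neg, map_one]

lemma my_P_eq (n : ℕ) : P n = AddMonoidAlgebra.single (-(n:ℤ)-6) 1
    + ∑ j ∈ Finset.Icc 1 n, (AddMonoidAlgebra.single (4*(j:ℤ)-(n:ℤ)+2) ((-1:ℤ)^j)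
        + AddMonoidAlgebra.single (4*(j:ℤ)-(n:ℤ)-6) ((-1:ℤ)^j)) := by
  unfold P
  rw [Finset.mul_sum]
  congr 1
  refine Finset.sum_congr rfl fun j hj => ?_
  rw [my_neg_one_pow, my_expand,
    show (4*(j:ℤ) - n - 2) + 4 = 4*(j:ℤ)-(n:ℤ)+2 by ring,
    show (4*(j:ℤ) - n - 2) - 4 = 4*(j:ℤ)-(n:ℤ)-6 by ring,
    single_eq_C_mul_T, single_eq_C_mul_T]

lemma my_Pbar_eq (n : ℕ) : Pbar n = AddMonoidAlgebra.single ((n:ℤ)+6) 1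
    + ∑ j ∈ Finset.Icc 1 n, (AddMonoidAlgebra.single (-4*(j:ℤ)+(n:ℤ)+6) ((-1:ℤ)^j)
        + AddMonoidAlgebra.single (-4*(j:ℤ)+(n:ℤ)-2) ((-1:ℤ)^j)) := by
  unfold Pbar
  rw [Finset.mul_sum]
  congr 1
  refine Finset.sum_congr rfl fun j hj => ?_
  rw [my_neg_one_pow, my_expand,
    show (-4*(j:ℤ) + n + 2) + 4 = -4*(j:ℤ)+(n:ℤ)+6 by ring,
    show (-4*(j:ℤ) + n + 2) - 4 = -4*(j:ℤ)+(n:ℤ)-2 by ring,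
    single_eq_C_mul_T, single_eq_C_mul_T]

lemma my_coeffA_P (n : ℕ) (k : ℤ) : coeffA (P n) k =
    (if -(n:ℤ)-6 = k then 1 else 0)
    + ∑ j ∈ Finset.Icc 1 n, ((if 4*(j:ℤ)-(n:ℤ)+2 = k then (-1:ℤ)^j else 0)
        + (if 4*(j:ℤ)-(n:ℤ)-6 = k then (-1:ℤ)^j else 0)) := by
  rw [my_P_eq, coeffA, my_add_apply, my_sum_apply, my_single_apply]
  refine congrArg _ (Finset.sum_congr rfl fun j _ => ?_)
  rw [my_add_apply, my_single_apply, my_single_apply]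

lemma my_coeffA_Pbar (n : ℕ) (k : ℤ) : coeffA (Pbar n) k =
    (if (n:ℤ)+6 = k then 1 else 0)
    + ∑ j ∈ Finset.Icc 1 n, ((if -4*(j:ℤ)+(n:ℤ)+6 = k then (-1:ℤ)^j else 0)
        + (if -4*(j:ℤ)+(n:ℤ)-2 = k then (-1:ℤ)^j else 0)) := by
  rw [my_Pbar_eq, coeffA, my_add_apply, my_sum_apply, my_single_apply]
  refine congrArg _ (Finset.sum_congr rfl fun j _ => ?_)
  rw [my_add_apply, my_single_apply, my_single_apply]

lemma my_P_ub (n : ℕ) : UBd (P n) (3*(n:ℤ)+2) := by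
  intro k hk
  rw [my_coeffA_P, if_neg (by omega)]
  rw [Finset.sum_eq_zero]
  · ring
  · intro j hj
    simp only [Finset.mem_Icc] at hj
    rw [if_neg (by omega), if_neg (by omega)]; ring

lemma my_P_lb (n : ℕ) : LBd (P n) (-(n:ℤ)-6) := by
  intro k hk
  rw [my_coeffA_P, if_neg (by omega)]
  rw [Finset.sum_eq_zero]
  · ring
  · intro j hj
    simp only [Finset.mem_Icc] at hj
    rw [if_neg (by omega), if_neg (by omega)]; ring

lemma my_P_hi (n : ℕ) (hn : 1 ≤ n) : coeffA (P n) (3*(n:ℤ)+2) = (-1:ℤ)^n := by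
  rw [my_coeffA_P, if_neg (by omega)]
  rw [Finset.sum_eq_single n]
  · rw [if_pos (by push_cast; ring), if_neg (by omega)]; ring
  · intro j hj hjn
    simp only [Finset.mem_Icc] at hj
    rw [if_neg (by omega), if_neg (by omega)]; ring
  · intro h
    simp only [Finset.mem_Icc] at h; omega

lemma my_P_lo (n : ℕ) (hn : 1 ≤ n) : coeffA (P n) (-(n:ℤ)-6) = 1 := by
  rw [my_coeffA_P, if_pos rfl]
  rw [Finset.sum_eq_zero]
  · ring
  · intro j hj
    simp only [Finset.mem_Icc] at hj
    rw [if_neg (by omega), if_neg (by omega)]; ring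

lemma my_Pbar_ub (n : ℕ) : UBd (Pbar n) ((n:ℤ)+6) := by
  intro k hk
  rw [my_coeffA_Pbar, if_neg (by omega)]
  rw [Finset.sum_eq_zero]
  · ring
  · intro j hj
    simp only [Finset.mem_Icc] at hj
    rw [if_neg (by omega), if_neg (by omega)]; ring

lemma my_Pbar_lb (n : ℕ) : LBd (Pbar n) (-3*(n:ℤ)-2) := by
  intro k hk
  rw [my_coeffA_Pbar, if_neg (by omega)]
  rw [Finset.sum_eq_zero]
  · ring
  · intro j hj
    simp only [Finset.mem_Icc] at hj
    rw [if_neg (by omega), if_neg (by omega)]; ring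

lemma my_Pbar_hi (n : ℕ) (hn : 1 ≤ n) : coeffA (Pbar n) ((n:ℤ)+6) = 1 := by
  rw [my_coeffA_Pbar, if_pos rfl]
  rw [Finset.sum_eq_zero]
  · ring
  · intro j hj
    simp only [Finset.mem_Icc] at hj
    rw [if_neg (by omega), if_neg (by omega)]; ring

lemma my_Pbar_lo (n : ℕ) (hn : 1 ≤ n) : coeffA (Pbar n) (-3*(n:ℤ)-2) = (-1:ℤ)^n := by
  rw [my_coeffA_Pbar, if_neg (by omega)]
  rw [Finset.sum_eq_single n]
  · rw [if_neg (by omega), if_pos (by push_cast; ring)]; ring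
  · intro j hj hjn
    simp only [Finset.mem_Icc] at hj
    rw [if_neg (by omega), if_neg (by omega)]; ring
  · intro h
    simp only [Finset.mem_Icc] at h; omega

lemma my_two_eq : (2 : LaurentPolynomial ℤ) = AddMonoidAlgebra.single 0 2 := by
  rw [single_eq_C_mul_T, T_zero, mul_one, map_ofNat]

lemma my_coeffA_G (k : ℤ) : coeffA (-T 4 - T (-4) + 2) k =
    -(if (4:ℤ) = k then 1 else 0) - (if (-4:ℤ) = k then 1 else 0)
      + (if (0:ℤ) = k then 2 else 0) := by
  simp only [coeffA, my_two_eq, LaurentPolynomial.T, my_add_apply, my_sub_apply,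
    my_neg_apply, my_single_apply]

lemma my_G_ub : UBd (-T 4 - T (-4) + 2) 4 := by
  intro k hk
  rw [my_coeffA_G, if_neg (by omega), if_neg (by omega), if_neg (by omega)]; ring

lemma my_G_lb : LBd (-T 4 - T (-4) + 2) (-4) := by
  intro k hk
  rw [my_coeffA_G, if_neg (by omega), if_neg (by omega), if_neg (by omega)]; ring

lemma my_G_hi : coeffA (-T 4 - T (-4) + 2) 4 = -1 := by
  rw [my_coeffA_G, if_pos rfl, if_neg (by omega), if_neg (by omega)]; ring

lemma my_G_lo : coeffA (-T 4 - T (-4) + 2) (-4) = -1 := by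
  rw [my_coeffA_G, if_neg (by omega), if_pos rfl, if_neg (by omega)]; ring

lemma my_F_eq : ((-T 6 - T (-6)) * (-T 2 - T (-2)) : LaurentPolynomial ℤ)
    = T (-8) + T (-4) + T 4 + T 8 := by
  rw [show ((-8:ℤ)) = -6 + (-2) by norm_num, T_add,
      show ((-4:ℤ)) = -6 + 2 by norm_num, T_add,
      show ((4:ℤ)) = 6 + (-2) by norm_num, T_add,
      show ((8:ℤ)) = 6 + 2 by norm_num, T_add]
  ring

lemma my_coeffA_F (k : ℤ) (hk : k < -8 ∨ 8 < k) :
    coeffA ((-T 6 - T (-6)) * (-T 2 - T (-2))) k = 0 := by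
  rw [my_F_eq]
  simp only [coeffA, LaurentPolynomial.T, my_add_apply, my_single_apply]
  rw [if_neg (by omega), if_neg (by omega), if_neg (by omega), if_neg (by omega)]
  ring

/-- the bracket W(n) = (−A⁶−A⁻⁶)(−A²−A⁻²) + (−A⁴−A⁻⁴+2)·P(n)·P̄(n)
has h = 4n+12, ℓ = −4n−12, span 8n+24 > 16, hence span ≠ 16. -/
theorem stmt_1 (n : ℕ) (hn : 1 ≤ n)
    (W : LaurentPolynomial ℤ)
    (hW : W = (-T 6 - T (-6)) * (-T 2 - T (-2)) + (-T 4 - T (-4) + 2) * (P n * Pbar n)) :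
    IsHi W (4*(n:ℤ) + 12) ∧ IsLo W (-4*(n:ℤ) - 12) ∧
    (4*(n:ℤ) + 12) - (-4*(n:ℤ) - 12) = 8*(n:ℤ) + 24 ∧
    8*(n:ℤ) + 24 > 16 ∧ 8*(n:ℤ) + 24 ≠ 16 := by
  have hn1 : (1:ℤ) ≤ (n:ℤ) := by exact_mod_cast hn
  -- product bounds
  have prod_ub : UBd (P n * Pbar n) (4*(n:ℤ)+8) := by
    have := my_mul_UBd (my_P_ub n) (my_Pbar_ub n)
    rwa [show (3*(n:ℤ)+2) + ((n:ℤ)+6) = 4*(n:ℤ)+8 by ring] at this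
  have prod_lb : LBd (P n * Pbar n) (-4*(n:ℤ)-8) := by
    have := my_mul_LBd (my_P_lb n) (my_Pbar_lb n)
    rwa [show (-(n:ℤ)-6) + (-3*(n:ℤ)-2) = -4*(n:ℤ)-8 by ring] at this
  have prod_hi : coeffA (P n * Pbar n) (4*(n:ℤ)+8) = (-1:ℤ)^n := by
    have := my_coeffA_mul_top (my_P_ub n) (my_Pbar_ub n)
    rw [show (3*(n:ℤ)+2) + ((n:ℤ)+6) = 4*(n:ℤ)+8 by ring] at this
    rw [this, my_P_hi n hn, my_Pbar_hi n hn, mul_one]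
  have prod_lo : coeffA (P n * Pbar n) (-4*(n:ℤ)-8) = (-1:ℤ)^n := by
    have := my_coeffA_mul_bot (my_P_lb n) (my_Pbar_lb n)
    rw [show (-(n:ℤ)-6) + (-3*(n:ℤ)-2) = -4*(n:ℤ)-8 by ring] at this
    rw [this, my_P_lo n hn, my_Pbar_lo n hn, one_mul]
  -- G * product
  have Gp_ub : UBd ((-T 4 - T (-4) + 2) * (P n * Pbar n)) (4*(n:ℤ)+12) := by
    have := my_mul_UBd my_G_ub prod_ub
    rwa [show (4:ℤ) + (4*(n:ℤ)+8) = 4*(n:ℤ)+12 by ring] at this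
  have Gp_lb : LBd ((-T 4 - T (-4) + 2) * (P n * Pbar n)) (-4*(n:ℤ)-12) := by
    have := my_mul_LBd my_G_lb prod_lb
    rwa [show (-4:ℤ) + (-4*(n:ℤ)-8) = -4*(n:ℤ)-12 by ring] at this
  have Gp_hi : coeffA ((-T 4 - T (-4) + 2) * (P n * Pbar n)) (4*(n:ℤ)+12) = -(-1:ℤ)^n := by
    have := my_coeffA_mul_top my_G_ub prod_ub
    rw [show (4:ℤ) + (4*(n:ℤ)+8) = 4*(n:ℤ)+12 by ring] at this
    rw [this, my_G_hi, prod_hi]; ring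
  have Gp_lo : coeffA ((-T 4 - T (-4) + 2) * (P n * Pbar n)) (-4*(n:ℤ)-12) = -(-1:ℤ)^n := by
    have := my_coeffA_mul_bot my_G_lb prod_lb
    rw [show (-4:ℤ) + (-4*(n:ℤ)-8) = -4*(n:ℤ)-12 by ring] at this
    rw [this, my_G_lo, prod_lo]; ring
  have hne : -(-1:ℤ)^n ≠ 0 := by
    simp [pow_ne_zero]
  have hadd : ∀ k, coeffA W k =
      coeffA ((-T 6 - T (-6)) * (-T 2 - T (-2))) k
        + coeffA ((-T 4 - T (-4) + 2) * (P n * Pbar n)) k := by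
    intro k; rw [hW]; exact my_add_apply _ _ _
  refine ⟨⟨?_, ?_⟩, ⟨?_, ?_⟩, by ring, by omega, by omega⟩
  · rw [hadd, my_coeffA_F _ (by omega), Gp_hi, zero_add]; exact hne
  · intro k hk
    rw [hadd, my_coeffA_F _ (by omega), Gp_ub k hk, zero_add]
  · rw [hadd, my_coeffA_F _ (by omega), Gp_lo, zero_add]; exact hne
  · intro k hk
    rw [hadd, my_coeffA_F _ (by omega), Gp_lb k hk, zero_add]
end

section
/- Let f, g ∈ ℤ[A, A⁻¹] satisfy: h(f) = 40 with the coefficient of A^{40} in f equal to 1, ℓ(f) = −52 with the coefficient of A^{−52} in f equal to −1, h(g) = 34 with the coefficient of A^{34} in g equal to −1, and ℓ(g) = −58 with the coefficient of A^{−58} in g equal to 1. Let δ = −A²−A⁻², and define sequences f_n, g_n for n ≥ 1 by f₁ = f, g₁ = g, f_{n+1} = f_n·f, and g_{n+1} = f_n·g + g_n·f + δ·g_n·g. Then for every n ≥ 1: h(f_n) = 40n with the coefficient of A^{40n} in f_n equal to 1; ℓ(f_n) = −52n with the coefficient of A^{−52n} in f_n equal to (−1)^n; h(g_n) = 40n−6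 with the coefficient of A^{40n−6} in g_n equal to −n; and ℓ(g_n) = −60n+2 with the coefficient of A^{−60n+2} in g_n equal to (−1)^{n+1}. -/
open LaurentPolynomial Finset

lemma ub_mul {y z : LaurentPolynomial ℤ} {d e : ℤ}
    (hy : ∀ k, d < k → y.coeff k = 0) (hz : ∀ k, e < k → z.coeff k = 0) :
    ∀ k, d + e < k → (y * z).coeff k = 0 := by
  intro k hk
  classical
  rw [AddMonoidAlgebra.mul_apply]
  rw [Finsupp.sum]
  apply Finset.sum_eq_zero
  intro a₁ _
  rw [Finsupp.sum]
  apply Finset.sum_eq_zero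
  intro a₂ ha₂
  split_ifs with h
  · by_cases h1 : d < a₁
    · rw [hy _ h1, zero_mul]
    · have : e < a₂ := by omega
      rw [hz _ this, mul_zero]
  · rfl

lemma mul_apply_top {y z : LaurentPolynomial ℤ} {d e : ℤ}
    (hy : ∀ k, d < k → y.coeff k = 0) (hz : ∀ k, e < k → z.coeff k = 0) :
    (y * z).coeff (d + e) = y.coeff d * z.coeff e := by
  classical
  rw [AddMonoidAlgebra.mul_apply]
  have step1 : (y.coeff.sum fun a₁ b₁ => z.coeff.sum fun a₂ b₂ => if a₁ + a₂ = d + e then b₁ * b₂ else 0)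
      = y.coeff.sum fun a₁ b₁ => if a₁ = d then b₁ * z.coeff e else 0 := by
    apply Finsupp.sum_congr
    intro a₁ ha₁
    have hle : a₁ ≤ d := by
      by_contra h
      exact (Finsupp.mem_support_iff.mp ha₁) (hy _ (by omega))
    by_cases hda : a₁ = d
    · subst hda
      simp only [if_pos rfl]
      have : (z.coeff.sum fun a₂ b₂ => if a₁ + a₂ = a₁ + e then y.coeff a₁ * b₂ else 0)
          = (z.coeff.sum fun a₂ b₂ => if a₂ = e then y.coeff a₁ * b₂ else 0) := by
        apply Finsupp.sum_congr
        intro a₂ _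
        congr 1
        simp [add_right_inj]
      rw [this, Finsupp.sum_ite_eq' z.coeff e (fun _ b₂ => y.coeff a₁ * b₂)]
      split_ifs with hmem
      · rfl
      · rw [Finsupp.notMem_support_iff.mp hmem, mul_zero]
    · rw [if_neg hda]
      rw [Finsupp.sum]
      apply Finset.sum_eq_zero
      intro a₂ _
      split_ifs with h
      · have : e < a₂ := by omega
        rw [hz _ this, mul_zero]
      · rfl
  rw [step1, Finsupp.sum_ite_eq' y.coeff d (fun _ b₁ => b₁ * z.coeff e)]
  split_ifs with hmem
  · rfl
  · rw [Finsupp.notMem_support_iff.mp hmem, zero_mul]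

lemma lb_mul {y z : LaurentPolynomial ℤ} {d e : ℤ}
    (hy : ∀ k, k < d → y.coeff k = 0) (hz : ∀ k, k < e → z.coeff k = 0) :
    ∀ k, k < d + e → (y * z).coeff k = 0 := by
  intro k hk
  have h1 : ∀ k, -d < k → (invert y).coeff k = 0 := fun k h => by
    rw [invert_apply]; exact hy _ (by omega)
  have h2 : ∀ k, -e < k → (invert z).coeff k = 0 := fun k h => by
    rw [invert_apply]; exact hz _ (by omega)
  have h3 := ub_mul h1 h2 (-k) (by omega)
  have e1 : (invert (y*z) : LaurentPolynomial ℤ).coeff (-k) = (y * z).coeff k := by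
    rw [invert_apply, neg_neg]
  rw [map_mul] at e1
  rw [← e1]; exact h3

lemma mul_apply_bot {y z : LaurentPolynomial ℤ} {d e : ℤ}
    (hy : ∀ k, k < d → y.coeff k = 0) (hz : ∀ k, k < e → z.coeff k = 0) :
    (y * z).coeff (d + e) = y.coeff d * z.coeff e := by
  have h1 : ∀ k, -d < k → (invert y).coeff k = 0 := fun k h => by
    rw [invert_apply]; exact hy _ (by omega)
  have h2 : ∀ k, -e < k → (invert z).coeff k = 0 := fun k h => by
    rw [invert_apply]; exact hz _ (by omega)
  have h3 := mul_apply_top h1 h2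
  rw [← map_mul, show (-d + -e : ℤ) = -(d+e) by ring] at h3
  simp only [invert_apply, neg_neg] at h3
  exact h3

lemma HiCoeff.mul {y z : LaurentPolynomial ℤ} {d e c c' : ℤ}
    (hy : HiCoeff y d c) (hz : HiCoeff z e c') : HiCoeff (y * z) (d + e) (c * c') := by
  obtain ⟨hy1, hy2, hy3⟩ := hy
  obtain ⟨hz1, hz2, hz3⟩ := hz
  refine ⟨?_, mul_ne_zero hy2 hz2, ?_⟩
  · show (y * z).coeff (d + e) = c * c'
    rw [mul_apply_top hy3 hz3]; rw [coeffA] at hy1 hz1; rw [hy1, hz1]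
  · exact ub_mul hy3 hz3

lemma LoCoeff.mul {y z : LaurentPolynomial ℤ} {d e c c' : ℤ}
    (hy : LoCoeff y d c) (hz : LoCoeff z e c') : LoCoeff (y * z) (d + e) (c * c') := by
  obtain ⟨hy1, hy2, hy3⟩ := hy
  obtain ⟨hz1, hz2, hz3⟩ := hz
  refine ⟨?_, mul_ne_zero hy2 hz2, ?_⟩
  · show (y * z).coeff (d + e) = c * c'
    rw [mul_apply_bot hy3 hz3]; rw [coeffA] at hy1 hz1; rw [hy1, hz1]
  · exact lb_mul hy3 hz3

lemma coeffA_delta (k : ℤ) :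
    coeffA (-T 2 - T (-2)) k =
      (if (2 : ℤ) = k then (-1 : ℤ) else 0) + (if (-2 : ℤ) = k then (-1 : ℤ) else 0) := by
  show (-T 2 - T (-2) : LaurentPolynomial ℤ).coeff k = _
  rw [sub_eq_add_neg, AddMonoidAlgebra.coeff_add, Finsupp.add_apply, AddMonoidAlgebra.coeff_neg,
    AddMonoidAlgebra.coeff_neg, Finsupp.neg_apply, Finsupp.neg_apply,
    T_apply, T_apply]
  split_ifs <;> ring

lemma hi_delta : HiCoeff (-T 2 - T (-2)) 2 (-1) := by
  refine ⟨?_, by norm_num, ?_⟩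
  · rw [coeffA_delta]; norm_num
  · intro k hk; rw [coeffA_delta]
    rw [if_neg (by omega), if_neg (by omega)]; ring

lemma lo_delta : LoCoeff (-T 2 - T (-2)) (-2) (-1) := by
  refine ⟨?_, by norm_num, ?_⟩
  · rw [coeffA_delta]; norm_num
  · intro k hk; rw [coeffA_delta]
    rw [if_neg (by omega), if_neg (by omega)]; ring

lemma coeffA_add (y z : LaurentPolynomial ℤ) (k : ℤ) :
    coeffA (y + z) k = coeffA y k + coeffA z k := Finsupp.add_apply y.coeff z.coeff k

lemma HiCoeff.congr {y : LaurentPolynomial ℤ} {d c d' c' : ℤ}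
    (h : HiCoeff y d c) (hd : d = d') (hc : c = c') : HiCoeff y d' c' := hd ▸ hc ▸ h

lemma LoCoeff.congr {y : LaurentPolynomial ℤ} {d c d' c' : ℤ}
    (h : LoCoeff y d c) (hd : d = d') (hc : c = c') : LoCoeff y d' c' := hd ▸ hc ▸ h


/-- the extreme monomials of the iterated bracket-vector entries f_n, g_n. -/
theorem stmt_11 (f g : LaurentPolynomial ℤ)
    (hfh : HiCoeff f 40 1) (hfl : LoCoeff f (-52) (-1))
    (hgh : HiCoeff g 34 (-1)) (hgl : LoCoeff g (-58) 1)
    (F G : ℕ → LaurentPolynomial ℤ)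
    (hF1 : F 1 = f) (hG1 : G 1 = g)
    (hFrec : ∀ n : ℕ, 1 ≤ n → F (n+1) = F n * f)
    (hGrec : ∀ n : ℕ, 1 ≤ n →
      G (n+1) = F n * g + G n * f + (-T 2 - T (-2)) * (G n * g)) :
    ∀ n : ℕ, 1 ≤ n →
      HiCoeff (F n) (40*(n:ℤ)) 1 ∧
      LoCoeff (F n) (-52*(n:ℤ)) ((-1)^n) ∧
      HiCoeff (G n) (40*(n:ℤ) - 6) (-(n:ℤ)) ∧
      LoCoeff (G n) (-60*(n:ℤ) + 2) ((-1)^(n+1)) := by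
  intro n hn
  induction n with
  | zero => omega
  | succ m ih =>
    rcases Nat.lt_or_ge m 1 with hm | hm
    · -- m = 0, base case n = 1
      have hm0 : m = 0 := by omega
      subst hm0
      rw [hF1, hG1]
      refine ⟨hfh.congr (by norm_num) rfl, hfl.congr (by norm_num) (by norm_num),
        hgh.congr (by norm_num) (by norm_num), hgl.congr (by norm_num) (by norm_num)⟩
    · obtain ⟨ihFh, ihFl, ihGh, ihGl⟩ := ih hm
      have hm1 : (1:ℤ) ≤ (m:ℤ) := by exact_mod_cast hm
      rw [hFrec m hm, hGrec m hm]
      have castm : ((m + 1 : ℕ) : ℤ) = (m:ℤ) + 1 := by push_cast; ring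
      refine ⟨?_, ?_, ?_, ?_⟩
      · exact (ihFh.mul hfh).congr (by rw [castm]; ring) (by ring)
      · exact (ihFl.mul hfl).congr (by rw [castm]; ring) (by rw [pow_succ])
      · -- Hi part of G
        have h1 := ihFh.mul hgh
        have h2 := ihGh.mul hfh
        have h3 := hi_delta.mul (ihGh.mul hgh)
        refine ⟨?_, by omega, ?_⟩
        · rw [coeffA_add, coeffA_add]
          have e1 : coeffA (F m * g) (40*((m+1:ℕ):ℤ) - 6) = 1 * -1 := by
            have : (40*(m:ℤ) + 34) = 40*((m+1:ℕ):ℤ) - 6 := by rw [castm]; ring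
            rw [← this]; exact h1.1
          have e2 : coeffA (G m * f) (40*((m+1:ℕ):ℤ) - 6) = -(m:ℤ) * 1 := by
            have : (40*(m:ℤ) - 6 + 40) = 40*((m+1:ℕ):ℤ) - 6 := by rw [castm]; ring
            rw [← this]; exact h2.1
          have e3 : coeffA ((-T 2 - T (-2)) * (G m * g)) (40*((m+1:ℕ):ℤ) - 6) = 0 := by
            apply h3.2.2
            rw [castm]; omega
          rw [e1, e2, e3, castm]; ring
        · intro k hk
          rw [castm] at hk
          rw [coeffA_add, coeffA_add,
            h1.2.2 k (by omega), h2.2.2 k (by omega), h3.2.2 k (by omega)]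
          ring
      · -- Lo part of G
        have l1 := ihFl.mul hgl
        have l2 := ihGl.mul hfl
        have l3 := lo_delta.mul (ihGl.mul hgl)
        have lne : ((-1:ℤ))^(m+1+1) ≠ 0 := by
          apply pow_ne_zero; norm_num
        refine ⟨?_, lne, ?_⟩
        · rw [coeffA_add, coeffA_add]
          have e1 : coeffA (F m * g) (-60*((m+1:ℕ):ℤ) + 2) = 0 := by
            apply l1.2.2; rw [castm]; omega
          have e2 : coeffA (G m * f) (-60*((m+1:ℕ):ℤ) + 2) = 0 := by
            apply l2.2.2; rw [castm]; omega
          have e3 : coeffA ((-T 2 - T (-2)) * (G m * g)) (-60*((m+1:ℕ):ℤ) + 2)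
              = -1 * ((-1)^(m+1) * 1) := by
            have : (-2 + (-60*(m:ℤ) + 2 + -58)) = -60*((m+1:ℕ):ℤ) + 2 := by rw [castm]; ring
            rw [← this]; exact l3.1
          rw [e1, e2, e3, pow_succ]; ring
        · intro k hk
          rw [castm] at hk
          rw [coeffA_add, coeffA_add,
            l1.2.2 k (by omega), l2.2.2 k (by omega), l3.2.2 k (by omega)]
          ring
end

section
/- Let f, g ∈ ℤ[A, A⁻¹] satisfy: h(f) = 40 with the coefficient of A^{40} in f equal to 1, ℓ(f) = −52 with the coefficient of A^{−52} in f equal to −1, h(g) = 34 with the coefficient of A^{34} in g equal to −1, and ℓ(g) = −58 with the coefficient of A^{−58} in g equal to 1. Let δ = −A²−A⁻², and define f₁ = f, g₁ = g, f_{n+1} = f_n·f, g_{n+1} = f_n·g + g_n·f + δ·g_n·g for n ≥ 1. Set W_n = f_n·(−A¹¹−2A³−A⁻⁵) + g_n·(A⁹+A−A⁻³+A⁻⁷). Then for every n ≥ 1, h(W_n) = 40n+11 with the coefficient of A^{40n+11} in W_n equal to −1, and ℓ(W_n) = −60n−5 with the coefficient of A^{−60n−5} in W_n equal to (−1)^{n+1};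 hence span(W_n) = 100n+16. In particular, span(W_n) ≠ span(W_{n'}) for n ≠ n', and span(W_n) ≠ 16 for all n ≥ 1. -/
open LaurentPolynomial Finset

lemma coeff_T (n k : ℤ) : coeffA (T n) k = if n = k then 1 else 0 := by
  rw [coeffA]
  exact T_apply k n

lemma coeff_add (a b : LaurentPolynomial ℤ) (k : ℤ) : coeffA (a + b) k = coeffA a k + coeffA b k :=
  by simp only [coeffA, AddMonoidAlgebra.coeff_add, Finsupp.add_apply]

lemma coeff_neg (a : LaurentPolynomial ℤ) (k : ℤ) : coeffA (-a) k = -coeffA a k :=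
  by simp only [coeffA, AddMonoidAlgebra.coeff_neg, Finsupp.neg_apply]

lemma coeff_sub (a b : LaurentPolynomial ℤ) (k : ℤ) : coeffA (a - b) k = coeffA a k - coeffA b k :=
  by simp only [coeffA, AddMonoidAlgebra.coeff_sub, Finsupp.sub_apply]

lemma coeff_mul_top (a b : LaurentPolynomial ℤ) (d e : ℤ)
    (ha : ∀ k, d < k → coeffA a k = 0) (hb : ∀ k, e < k → coeffA b k = 0) :
    coeffA (a * b) (d + e) = coeffA a d * coeffA b e := by
  simp only [coeffA] at *
  rw [AddMonoidAlgebra.mul_apply]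
  generalize AddMonoidAlgebra.coeff a = a at *
  generalize AddMonoidAlgebra.coeff b = b at *
  simp only [Finsupp.sum]
  have hsa : ∀ i ∈ a.support, i ≤ d := fun i hi => by
    by_contra h
    exact (Finsupp.mem_support_iff.mp hi) (ha i (lt_of_not_ge h))
  have hsb : ∀ j ∈ b.support, j ≤ e := fun j hj => by
    by_contra h
    exact (Finsupp.mem_support_iff.mp hj) (hb j (lt_of_not_ge h))
  have step1 : ∀ i ∈ a.support,
      (∑ j ∈ b.support, if i + j = d + e then a i * b j else 0)
        = if i = d then (if e ∈ b.support then a d * b e else 0) else 0 := by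
    intro i hi
    by_cases h : i = d
    · subst h
      rw [if_pos rfl]
      rw [← Finset.sum_ite_eq' b.support e (fun j => a i * b j)]
      apply Finset.sum_congr rfl
      intro j _
      simp only [add_right_inj]
    · rw [if_neg h]
      apply Finset.sum_eq_zero
      intro j hj
      have h1 : i ≤ d := hsa i hi
      have h2 : j ≤ e := hsb j hj
      have : i + j ≠ d + e := by omega
      rw [if_neg this]
  rw [Finset.sum_congr rfl step1, Finset.sum_ite_eq' a.support d _]
  by_cases hd : d ∈ a.support
  · rw [if_pos hd]
    by_cases he : e ∈ b.support
    · rw [if_pos he]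
    · rw [if_neg he, Finsupp.notMem_support_iff.mp he, mul_zero]
  · rw [if_neg hd, Finsupp.notMem_support_iff.mp hd, zero_mul]

lemma coeff_mul_hi_zero (a b : LaurentPolynomial ℤ) (d e : ℤ)
    (ha : ∀ k, d < k → coeffA a k = 0) (hb : ∀ k, e < k → coeffA b k = 0) :
    ∀ x, d + e < x → coeffA (a * b) x = 0 := by
  intro x hx
  simp only [coeffA] at *
  rw [AddMonoidAlgebra.mul_apply]
  generalize AddMonoidAlgebra.coeff a = a at *
  generalize AddMonoidAlgebra.coeff b = b at *
  simp only [Finsupp.sum]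
  apply Finset.sum_eq_zero
  intro i hi
  apply Finset.sum_eq_zero
  intro j hj
  have h1 : i ≤ d := by
    by_contra h; exact (Finsupp.mem_support_iff.mp hi) (ha i (lt_of_not_ge h))
  have h2 : j ≤ e := by
    by_contra h; exact (Finsupp.mem_support_iff.mp hj) (hb j (lt_of_not_ge h))
  have : i + j ≠ x := by omega
  rw [if_neg this]

lemma coeff_mul_bot (a b : LaurentPolynomial ℤ) (d e : ℤ)
    (ha : ∀ k, k < d → coeffA a k = 0) (hb : ∀ k, k < e → coeffA b k = 0) :
    coeffA (a * b) (d + e) = coeffA a d * coeffA b e := by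
  simp only [coeffA] at *
  rw [AddMonoidAlgebra.mul_apply]
  generalize AddMonoidAlgebra.coeff a = a at *
  generalize AddMonoidAlgebra.coeff b = b at *
  simp only [Finsupp.sum]
  have hsa : ∀ i ∈ a.support, d ≤ i := fun i hi => by
    by_contra h
    exact (Finsupp.mem_support_iff.mp hi) (ha i (lt_of_not_ge h))
  have hsb : ∀ j ∈ b.support, e ≤ j := fun j hj => by
    by_contra h
    exact (Finsupp.mem_support_iff.mp hj) (hb j (lt_of_not_ge h))
  have step1 : ∀ i ∈ a.support,
      (∑ j ∈ b.support, if i + j = d + e then a i * b j else 0)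
        = if i = d then (if e ∈ b.support then a d * b e else 0) else 0 := by
    intro i hi
    by_cases h : i = d
    · subst h
      rw [if_pos rfl]
      rw [← Finset.sum_ite_eq' b.support e (fun j => a i * b j)]
      apply Finset.sum_congr rfl
      intro j _
      simp only [add_right_inj]
    · rw [if_neg h]
      apply Finset.sum_eq_zero
      intro j hj
      have h1 : d ≤ i := hsa i hi
      have h2 : e ≤ j := hsb j hj
      have : i + j ≠ d + e := by omega
      rw [if_neg this]
  rw [Finset.sum_congr rfl step1, Finset.sum_ite_eq' a.support d _]
  by_cases hd : d ∈ a.support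
  · rw [if_pos hd]
    by_cases he : e ∈ b.support
    · rw [if_pos he]
    · rw [if_neg he, Finsupp.notMem_support_iff.mp he, mul_zero]
  · rw [if_neg hd, Finsupp.notMem_support_iff.mp hd, zero_mul]

lemma coeff_mul_lo_zero (a b : LaurentPolynomial ℤ) (d e : ℤ)
    (ha : ∀ k, k < d → coeffA a k = 0) (hb : ∀ k, k < e → coeffA b k = 0) :
    ∀ x, x < d + e → coeffA (a * b) x = 0 := by
  intro x hx
  simp only [coeffA] at *
  rw [AddMonoidAlgebra.mul_apply]
  generalize AddMonoidAlgebra.coeff a = a at *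
  generalize AddMonoidAlgebra.coeff b = b at *
  simp only [Finsupp.sum]
  apply Finset.sum_eq_zero
  intro i hi
  apply Finset.sum_eq_zero
  intro j hj
  have h1 : d ≤ i := by
    by_contra h; exact (Finsupp.mem_support_iff.mp hi) (ha i (lt_of_not_ge h))
  have h2 : e ≤ j := by
    by_contra h; exact (Finsupp.mem_support_iff.mp hj) (hb j (lt_of_not_ge h))
  have : i + j ≠ x := by omega
  rw [if_neg this]


lemma hi_mul {a b : LaurentPolynomial ℤ} {d e c c' s cc : ℤ}
    (ha : HiCoeff a d c) (hb : HiCoeff b e c')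
    (hs : s = d + e) (hcc : cc = c * c') : HiCoeff (a * b) s cc := by
  obtain ⟨ha1, ha2, ha3⟩ := ha
  obtain ⟨hb1, hb2, hb3⟩ := hb
  subst hs hcc
  refine ⟨?_, mul_ne_zero ha2 hb2, ?_⟩
  · rw [coeff_mul_top a b d e ha3 hb3, ha1, hb1]
  · exact coeff_mul_hi_zero a b d e ha3 hb3

lemma lo_mul {a b : LaurentPolynomial ℤ} {d e c c' s cc : ℤ}
    (ha : LoCoeff a d c) (hb : LoCoeff b e c')
    (hs : s = d + e) (hcc : cc = c * c') : LoCoeff (a * b) s cc := by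
  obtain ⟨ha1, ha2, ha3⟩ := ha
  obtain ⟨hb1, hb2, hb3⟩ := hb
  subst hs hcc
  refine ⟨?_, mul_ne_zero ha2 hb2, ?_⟩
  · rw [coeff_mul_bot a b d e ha3 hb3, ha1, hb1]
  · exact coeff_mul_lo_zero a b d e ha3 hb3

lemma hi_add_same {a b : LaurentPolynomial ℤ} {d c c' cc : ℤ}
    (ha : HiCoeff a d c) (hb : HiCoeff b d c') (hcc : cc = c + c') (h0 : cc ≠ 0) :
    HiCoeff (a + b) d cc := by
  obtain ⟨ha1, ha2, ha3⟩ := ha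
  obtain ⟨hb1, hb2, hb3⟩ := hb
  refine ⟨?_, h0, ?_⟩
  · rw [coeff_add, ha1, hb1, hcc]
  · intro k hk; rw [coeff_add, ha3 k hk, hb3 k hk, add_zero]

lemma hi_add_bdd {a b : LaurentPolynomial ℤ} {d c : ℤ}
    (ha : HiCoeff a d c) (hb : ∀ k, d ≤ k → coeffA b k = 0) :
    HiCoeff (a + b) d c := by
  obtain ⟨ha1, ha2, ha3⟩ := ha
  refine ⟨?_, ha2, ?_⟩
  · rw [coeff_add, ha1, hb d le_rfl, add_zero]
  · intro k hk; rw [coeff_add, ha3 k hk, hb k (le_of_lt hk), add_zero]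

lemma lo_bdd_add {a b : LaurentPolynomial ℤ} {d c : ℤ}
    (hb : LoCoeff b d c) (ha : ∀ k, k ≤ d → coeffA a k = 0) :
    LoCoeff (a + b) d c := by
  obtain ⟨hb1, hb2, hb3⟩ := hb
  refine ⟨?_, hb2, ?_⟩
  · rw [coeff_add, hb1, ha d le_rfl, zero_add]
  · intro k hk; rw [coeff_add, hb3 k hk, ha k (le_of_lt hk), add_zero]

lemma hi_bdd {a : LaurentPolynomial ℤ} {d' c d : ℤ}
    (h : HiCoeff a d' c) (hd : d' < d) : ∀ k, d ≤ k → coeffA a k = 0 :=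
  fun k hk => h.2.2 k (lt_of_lt_of_le hd hk)

lemma lo_bdd {a : LaurentPolynomial ℤ} {d' c d : ℤ}
    (h : LoCoeff a d' c) (hd : d < d') : ∀ k, k ≤ d → coeffA a k = 0 :=
  fun k hk => h.2.2 k (lt_of_le_of_lt hk hd)


lemma hi_congr {a : LaurentPolynomial ℤ} {d c d' c' : ℤ}
    (h : HiCoeff a d c) (hd : d' = d) (hc : c' = c) : HiCoeff a d' c' := by
  subst hd; subst hc; exact h

lemma lo_congr {a : LaurentPolynomial ℤ} {d c d' c' : ℤ}
    (h : LoCoeff a d c) (hd : d' = d) (hc : c' = c) : LoCoeff a d' c' := by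
  subst hd; subst hc; exact h

lemma hdh : HiCoeff (-T 2 - T (-2) : LaurentPolynomial ℤ) 2 (-1) := by
  refine ⟨?_, by norm_num, ?_⟩
  · simp [coeff_sub, coeff_neg, coeff_T]
  · intro k hk
    simp only [coeff_sub, coeff_neg, coeff_T]
    split_ifs <;> omega

lemma hdl : LoCoeff (-T 2 - T (-2) : LaurentPolynomial ℤ) (-2) (-1) := by
  refine ⟨?_, by norm_num, ?_⟩
  · simp [coeff_sub, coeff_neg, coeff_T]
  · intro k hk
    simp only [coeff_sub, coeff_neg, coeff_T]
    split_ifs <;> omega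

lemma twoT3 : (2 : LaurentPolynomial ℤ) * T 3 = T 3 + T 3 := two_mul _

lemma hXh : HiCoeff (-T 11 - 2 * T 3 - T (-5) : LaurentPolynomial ℤ) 11 (-1) := by
  rw [twoT3]
  refine ⟨?_, by norm_num, ?_⟩
  · simp [coeff_sub, coeff_neg, coeff_add, coeff_T]
  · intro k hk
    simp only [coeff_sub, coeff_neg, coeff_add, coeff_T]
    split_ifs <;> omega

lemma hXl : LoCoeff (-T 11 - 2 * T 3 - T (-5) : LaurentPolynomial ℤ) (-5) (-1) := by
  rw [twoT3]
  refine ⟨?_, by norm_num, ?_⟩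
  · simp [coeff_sub, coeff_neg, coeff_add, coeff_T]
  · intro k hk
    simp only [coeff_sub, coeff_neg, coeff_add, coeff_T]
    split_ifs <;> omega

lemma hYh : HiCoeff (T 9 + T 1 - T (-3) + T (-7) : LaurentPolynomial ℤ) 9 1 := by
  refine ⟨?_, by norm_num, ?_⟩
  · simp [coeff_sub, coeff_neg, coeff_add, coeff_T]
  · intro k hk
    simp only [coeff_sub, coeff_neg, coeff_add, coeff_T]
    split_ifs <;> omega

lemma hYl : LoCoeff (T 9 + T 1 - T (-3) + T (-7) : LaurentPolynomial ℤ) (-7) 1 := by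
  refine ⟨?_, by norm_num, ?_⟩
  · simp [coeff_sub, coeff_neg, coeff_add, coeff_T]
  · intro k hk
    simp only [coeff_sub, coeff_neg, coeff_add, coeff_T]
    split_ifs <;> omega

/-- extreme monomials and span of W_n = f_n·(−A¹¹−2A³−A⁻⁵) + g_n·(A⁹+A−A⁻³+A⁻⁷). -/
theorem stmt_12 (f g : LaurentPolynomial ℤ)
    (hfh : HiCoeff f 40 1) (hfl : LoCoeff f (-52) (-1))
    (hgh : HiCoeff g 34 (-1)) (hgl : LoCoeff g (-58) 1)
    (F G : ℕ → LaurentPolynomial ℤ)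
    (hF1 : F 1 = f) (hG1 : G 1 = g)
    (hFrec : ∀ n : ℕ, 1 ≤ n → F (n+1) = F n * f)
    (hGrec : ∀ n : ℕ, 1 ≤ n →
      G (n+1) = F n * g + G n * f + (-T 2 - T (-2)) * (G n * g))
    (W : ℕ → LaurentPolynomial ℤ)
    (hW : ∀ n : ℕ, W n = F n * (-T 11 - 2 * T 3 - T (-5)) + G n * (T 9 + T 1 - T (-3) + T (-7))) :
    (∀ n : ℕ, 1 ≤ n →
      HiCoeff (W n) (40*(n:ℤ) + 11) (-1) ∧
      LoCoeff (W n) (-60*(n:ℤ) - 5) ((-1)^(n+1)) ∧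
      (40*(n:ℤ) + 11) - (-60*(n:ℤ) - 5) = 100*(n:ℤ) + 16) ∧
    (∀ n n' : ℕ, 1 ≤ n → 1 ≤ n' → n ≠ n' → 100*(n:ℤ) + 16 ≠ 100*(n':ℤ) + 16) ∧
    (∀ n : ℕ, 1 ≤ n → 100*(n:ℤ) + 16 ≠ 16) := by
  have main : ∀ n : ℕ, 1 ≤ n →
      (HiCoeff (F n) (40*(n:ℤ)) 1 ∧ LoCoeff (F n) (-52*(n:ℤ)) ((-1)^n)) ∧
      (HiCoeff (G n) (40*(n:ℤ) - 6) (-(n:ℤ)) ∧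
        LoCoeff (G n) (-60*(n:ℤ) + 2) ((-1)^(n+1))) := by
    intro n hn
    induction n, hn using Nat.le_induction with
    | base =>
      rw [hF1, hG1]
      refine ⟨⟨hi_congr hfh (by norm_num) rfl, lo_congr hfl (by norm_num) (by norm_num)⟩,
        ⟨hi_congr hgh (by norm_num) (by norm_num), lo_congr hgl (by norm_num) (by norm_num)⟩⟩
    | succ m hm ih =>
      obtain ⟨⟨Fhi, Flo⟩, ⟨Ghi, Glo⟩⟩ := ih
      have hm1 : (1:ℤ) ≤ (m:ℤ) := by exact_mod_cast hm
      constructor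
      · rw [hFrec m hm]
        constructor
        · exact hi_congr (hi_mul Fhi hfh rfl rfl) (by push_cast; ring) (by ring)
        · exact lo_congr (lo_mul Flo hfl rfl rfl) (by push_cast; ring)
            (by rw [pow_succ])
      · rw [hGrec m hm]
        have h1 : HiCoeff (F m * g) (40*(m:ℤ) + 34) (-1) :=
          hi_mul Fhi hgh (by ring) (by ring)
        have h2 : HiCoeff (G m * f) (40*(m:ℤ) + 34) (-(m:ℤ)) :=
          hi_mul Ghi hfh (by ring) (by ring)
        have hGg : HiCoeff (G m * g) (40*(m:ℤ) + 28) ((m:ℤ)) :=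
          hi_mul Ghi hgh (by ring) (by ring)
        have h3 : HiCoeff ((-T 2 - T (-2)) * (G m * g)) (40*(m:ℤ) + 30) (-(m:ℤ)) :=
          hi_mul hdh hGg (by ring) (by ring)
        have l1 : LoCoeff (F m * g) (-52*(m:ℤ) - 58) ((-1)^m) :=
          lo_mul Flo hgl (by ring) (by ring)
        have l2 : LoCoeff (G m * f) (-60*(m:ℤ) - 50) ((-1)^m) :=
          lo_mul Glo hfl (by ring) (by rw [pow_succ]; ring)
        have lGg : LoCoeff (G m * g) (-60*(m:ℤ) - 56) ((-1)^(m+1)) :=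
          lo_mul Glo hgl (by ring) (by ring)
        have l3 : LoCoeff ((-T 2 - T (-2)) * (G m * g)) (-60*(m:ℤ) - 58) ((-1)^m) :=
          lo_mul hdl lGg (by ring) (by rw [pow_succ]; ring)
        constructor
        · refine hi_congr (hi_add_bdd (hi_add_same h1 h2 rfl ?_) ?_)
            (by push_cast; ring) (by push_cast; ring)
          · omega
          · exact hi_bdd h3 (by omega)
        · refine lo_congr (lo_bdd_add l3 ?_) (by push_cast; ring)
            (by rw [pow_succ, pow_succ]; ring)
          intro k hk
          rw [coeff_add, lo_bdd l1 (by omega) k hk, lo_bdd l2 (by omega) k hk, add_zero]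

  refine ⟨fun n hn => ?_, fun n n' h1 h2 hne => by omega, fun n hn => by omega⟩
  obtain ⟨⟨Fhi, Flo⟩, ⟨Ghi, Glo⟩⟩ := main n hn
  have hn1 : (1:ℤ) ≤ (n:ℤ) := by exact_mod_cast hn
  rw [hW n]
  have hFX : HiCoeff (F n * (-T 11 - 2 * T 3 - T (-5))) (40*(n:ℤ) + 11) (-1) :=
    hi_mul Fhi hXh (by ring) (by ring)
  have hGY : HiCoeff (G n * (T 9 + T 1 - T (-3) + T (-7))) (40*(n:ℤ) + 3) (-(n:ℤ)) :=
    hi_mul Ghi hYh (by ring) (by ring)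
  have lFX : LoCoeff (F n * (-T 11 - 2 * T 3 - T (-5))) (-52*(n:ℤ) - 5) ((-1)^(n+1)) :=
    lo_mul Flo hXl (by ring) (by rw [pow_succ])
  have lGY : LoCoeff (G n * (T 9 + T 1 - T (-3) + T (-7))) (-60*(n:ℤ) - 5) ((-1)^(n+1)) :=
    lo_mul Glo hYl (by ring) (by ring)
  refine ⟨?_, ?_, by ring⟩
  · exact hi_add_bdd hFX (hi_bdd hGY (by omega))
  · exact lo_bdd_add lGY (lo_bdd lFX (by omega))
end
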